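/- Let F_q be a finite field, A_1, …, A_n nonempty subsets of F_q, f_i = Π_{c ∈ A_i}(X_i − c), and I = (f_1,…,f_n). Then I equals the vanishing ideal of the set X = A_1 × ⋯ × A_n ⊆ F_q^n, i.e., a polynomial f ∈ F_q[X_1,…,X_n] vanishes at every point of X if and only if f ∈ I. -/

import Mathlib

open MvPolynomial

private lemma grid_vanish_mem_span (F : Type*) [Field F] :
    ∀ (n : ℕ) (A : Fin n → Finset F) (f : MvPolynomial (Fin n) F),
      (∀ x : Fin n → F, (∀ i, x i ∈ A i) → eval x f = 0) →
      f ∈ Ideal.span (Set.range fun i : Fin n =>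
        ∏ c ∈ A i, (X i - C c : MvPolynomial (Fin n) F)) := by
  intro n
  induction n with
  | zero =>
    intro A f h
    have hf : f = C (f.coeff 0) := eq_C_of_isEmpty f
    have h0 : eval (fun i : Fin 0 => i.elim0) f = 0 := h _ (fun i => i.elim0)
    rw [hf, eval_C] at h0
    rw [hf, h0, map_zero]
    exact zero_mem _
  | succ n ih =>
    intro A f h
    set e := finSuccEquiv F n with he
    set g0 : Polynomial (MvPolynomial (Fin n) F) :=
      ∏ c ∈ A 0, (Polynomial.X - Polynomial.C (C c)) with hg0def
    have hg0monic : g0.Monic :=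
      Polynomial.monic_prod_of_monic _ _ fun c _ => Polynomial.monic_X_sub_C _
    have hg0deg : g0.natDegree = (A 0).card := by
      rw [hg0def, Polynomial.natDegree_prod_of_monic _ _
        (fun c _ => Polynomial.monic_X_sub_C _)]
      simp [Polynomial.natDegree_X_sub_C]
    have hCc : ∀ c : F, e (C c) = Polynomial.C (C c) := by
      intro c
      simp [he, finSuccEquiv_apply]
    have hesymmC : ∀ c : F,
        e.symm (Polynomial.C (C c)) = (C c : MvPolynomial (Fin (n+1)) F) := by
      intro c
      rw [← hCc c, AlgEquiv.symm_apply_apply]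
    have heg0 : e.symm g0 = ∏ c ∈ A 0, (X 0 - C c : MvPolynomial (Fin (n+1)) F) := by
      rw [hg0def, map_prod]
      refine Finset.prod_congr rfl fun c _ => ?_
      rw [map_sub, hesymmC]
      congr 1
      rw [AlgEquiv.symm_apply_eq, finSuccEquiv_X_zero]
    set p := e f with hp
    set r := p %ₘ g0 with hr
    set q := p /ₘ g0 with hq
    have hsplit : f = e.symm r + e.symm (g0 * q) := by
      rw [← map_add, Polynomial.modByMonic_add_div p g0, hp,
        AlgEquiv.symm_apply_apply]
    -- every coefficient of r vanishes on the subgrid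
    have hcoeff : ∀ (x' : Fin n → F), (∀ i, x' i ∈ A i.succ) →
        ∀ j, eval x' (r.coeff j) = 0 := by
      intro x' hx'
      have hu : Polynomial.map (eval x') r = 0 := by
        apply Polynomial.eq_zero_of_degree_lt_of_eval_finset_eq_zero (A 0)
        · calc (Polynomial.map (eval x') r).degree ≤ r.degree :=
                Polynomial.degree_map_le
            _ < g0.degree := Polynomial.degree_modByMonic_lt p hg0monic
            _ = ((A 0).card : WithBot ℕ) := by
                rw [Polynomial.degree_eq_natDegree hg0monic.ne_zero, hg0deg]
        · intro c hc
          have hgrid : ∀ i : Fin (n+1), (Fin.cons c x' : Fin (n+1) → F) i ∈ A i := by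
            intro i
            refine Fin.cases ?_ ?_ i
            · simpa using hc
            · intro i; simpa using hx' i
          have h1 : eval (Fin.cons c x' : Fin (n+1) → F) f = 0 := h _ hgrid
          have h2 : eval (Fin.cons c x' : Fin (n+1) → F) (e.symm (g0 * q)) = 0 := by
            rw [eval_eq_eval_mv_eval' x' c (e.symm (g0 * q)),
              AlgEquiv.apply_symm_apply, Polynomial.map_mul, Polynomial.eval_mul]
            have : Polynomial.eval c (Polynomial.map (eval x') g0) = 0 := by
              rw [hg0def, Polynomial.map_prod, Polynomial.eval_prod]
              refine Finset.prod_eq_zero hc ?_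
              simp
            rw [this, zero_mul]
          have h3 : eval (Fin.cons c x' : Fin (n+1) → F) (e.symm r) = 0 := by
            have := hsplit ▸ h1
            rw [map_add, h2, add_zero] at this
            exact this
          rw [eval_eq_eval_mv_eval' x' c (e.symm r), AlgEquiv.apply_symm_apply] at h3
          exact h3
      intro j
      have := congrArg (fun u => Polynomial.coeff u j) hu
      simpa [Polynomial.coeff_map] using this
    -- the ring hom pushing n-variable polys into (n+1)-variable polys
    set φ : MvPolynomial (Fin n) F →+* MvPolynomial (Fin (n+1)) F :=
      (e.symm : Polynomial (MvPolynomial (Fin n) F) →+* MvPolynomial (Fin (n+1)) F).comp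
        Polynomial.C with hφ
    have hφX : ∀ i : Fin n, φ (X i) = (X i.succ : MvPolynomial (Fin (n+1)) F) := by
      intro i
      show e.symm (Polynomial.C (X i)) = _
      rw [AlgEquiv.symm_apply_eq, finSuccEquiv_X_succ]
    have hφC : ∀ c : F, φ (C c) = (C c : MvPolynomial (Fin (n+1)) F) := fun c => hesymmC c
    have hφmem : ∀ a : MvPolynomial (Fin n) F,
        a ∈ Ideal.span (Set.range fun i : Fin n =>
          ∏ c ∈ A i.succ, (X i - C c : MvPolynomial (Fin n) F)) →
        φ a ∈ Ideal.span (Set.range fun i : Fin (n+1) =>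
          ∏ c ∈ A i, (X i - C c : MvPolynomial (Fin (n+1)) F)) := by
      intro a ha
      have h1 : φ a ∈ Ideal.map φ (Ideal.span (Set.range fun i : Fin n =>
          ∏ c ∈ A i.succ, (X i - C c : MvPolynomial (Fin n) F))) :=
        Ideal.mem_map_of_mem φ ha
      rw [Ideal.map_span] at h1
      refine Ideal.span_le.mpr ?_ h1
      rintro y ⟨g, ⟨i, rfl⟩, rfl⟩
      refine Ideal.subset_span ⟨i.succ, ?_⟩
      rw [map_prod]
      refine Finset.prod_congr rfl fun c _ => ?_
      rw [map_sub, hφX, hφC]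
    -- conclude
    rw [hsplit]
    refine add_mem ?_ ?_
    · have hrsum : e.symm r = ∑ j ∈ r.support,
          φ (r.coeff j) * (X 0 : MvPolynomial (Fin (n+1)) F) ^ j := by
        conv_lhs => rw [← Polynomial.sum_C_mul_X_pow_eq r]
        rw [Polynomial.sum, map_sum]
        refine Finset.sum_congr rfl fun j _ => ?_
        rw [map_mul, map_pow,
          show e.symm Polynomial.X = (X 0 : MvPolynomial (Fin (n+1)) F) from by
            rw [AlgEquiv.symm_apply_eq, finSuccEquiv_X_zero]]
        rfl
      rw [hrsum]
      refine Ideal.sum_mem _ fun j _ => ?_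
      refine Ideal.mul_mem_right _ _ ?_
      refine hφmem _ (ih (fun i => A i.succ) _ ?_)
      intro x' hx'
      exact hcoeff x' hx' j
    · rw [map_mul, heg0]
      exact Ideal.mul_mem_right _ _ (Ideal.subset_span ⟨0, rfl⟩)

/-- `I = (f_1, …, f_n)` is the vanishing ideal of `X = A_1 × ⋯ × A_n`:
a polynomial vanishes on `X` iff it belongs to `I`. -/
theorem stmt5 (F : Type*) [Field F] [Fintype F] (n : ℕ)
    (A : Fin n → Finset F) (hA : ∀ i, (A i).Nonempty)
    (f : MvPolynomial (Fin n) F) :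
    (∀ x : Fin n → F, (∀ i, x i ∈ A i) → eval x f = 0) ↔
      f ∈ Ideal.span (Set.range fun i : Fin n =>
        ∏ c ∈ A i, (X i - C c : MvPolynomial (Fin n) F)) := by
  constructor
  · exact grid_vanish_mem_span F n A f
  · intro hf x hx
    have h1 : eval x f ∈ Ideal.map (eval x) (Ideal.span (Set.range fun i : Fin n =>
        ∏ c ∈ A i, (X i - C c : MvPolynomial (Fin n) F))) :=
      Ideal.mem_map_of_mem _ hf
    rw [Ideal.map_span] at h1
    have h2 : Ideal.span ((eval x) '' (Set.range fun i : Fin n =>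
        ∏ c ∈ A i, (X i - C c : MvPolynomial (Fin n) F))) ≤ ⊥ := by
      refine Ideal.span_le.mpr ?_
      rintro y ⟨g, ⟨i, rfl⟩, rfl⟩
      show _ ∈ (⊥ : Ideal F)
      rw [Ideal.mem_bot, map_prod]
      exact Finset.prod_eq_zero (hx i) (by simp)
    simpa using h2 h1
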